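/- Let X be a linearly ordered set and let G : X² → X be quasitrivial, symmetric, and nondecreasing. Then the n-ary operation F(x_1,...,x_n) = G(min_i x_i, max_i x_i) is derived from G, i.e., F(x_1,...,x_n) = G(G(...G(G(x_1,x_2),x_3)...),x_n) for all x_1,...,x_n. -/

import Mathlib

/-- `F` is quasitrivial: it always outputs one of its arguments. -/
def Quasitrivial {X : Type*} {n : ℕ} (F : (Fin n → X) → X) : Prop :=
  ∀ x : Fin n → X, ∃ i, F x = x i

/-- `F` is symmetric: invariant under permutation of its arguments. -/
def Symm {X : Type*} {n : ℕ} (F : (Fin n → X) → X) : Prop :=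
  ∀ (x : Fin n → X) (σ : Equiv.Perm (Fin n)), F (x ∘ σ) = F x

/-- `F` is nondecreasing in each argument. -/
def Nondecr {X : Type*} [LinearOrder X] {n : ℕ} (F : (Fin n → X) → X) : Prop :=
  ∀ x y : Fin n → X, (∀ i, x i ≤ y i) → F x ≤ F y

/-- `x` is an isolated point for `F`. -/
def Isolated {X : Type*} {n : ℕ} (F : (Fin n → X) → X) (x : Fin n → X) : Prop :=
  ∀ y : Fin n → X, F y = F x → y = x

/-- `e` is a neutral element of the `n`-ary operation `F`. -/
def Neutral {X : Type*} {n : ℕ} (F : (Fin n → X) → X) (e : X) : Prop :=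
  ∀ (i : Fin n) (x : X), F (Function.update (fun _ => e) i x) = x

/-- `n`-ary associativity: substituting `F` over the block of `n` consecutive
arguments starting at position `i` (0-based) of a `(2n-1)`-tuple gives the same
result as substituting over the block starting at position `i+1`. -/
def NAssoc {X : Type*} (n : ℕ) (F : (Fin n → X) → X) : Prop :=
  ∀ (x : ℕ → X) (i : ℕ), i + 2 ≤ n →
    F (fun j : Fin n => if (j : ℕ) < i then x j
        else if (j : ℕ) = i then F (fun k : Fin n => x (i + k)) else x (j + n - 1))
    = F (fun j : Fin n => if (j : ℕ) < i + 1 then x j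
        else if (j : ℕ) = i + 1 then F (fun k : Fin n => x (i + 1 + k)) else x (j + n - 1))

/-- `F` is bisymmetric. -/
def Bisymm {X : Type*} {n : ℕ} (F : (Fin n → X) → X) : Prop :=
  ∀ M : Fin n → Fin n → X,
    F (fun i => F (M i)) = F (fun j => F (fun i => M i j))

/-- `F` is ultrabisymmetric: the value `F (F ∘ rows)` is unchanged when two
entries of the matrix are exchanged. -/
def UltraBisymm {X : Type*} {n : ℕ} (F : (Fin n → X) → X) : Prop :=
  ∀ (M : Fin n → Fin n → X) (p q : Fin n × Fin n),
    F (fun i => F (M i)) =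
    F (fun i => F (fun j =>
      if (i, j) = p then M q.1 q.2 else if (i, j) = q then M p.1 p.2 else M i j))

/-- Iterated left composition `x 0 ∘ x 1 ∘ ⋯ ∘ x k` for a binary operation. -/
def iterComp {X : Type*} (H : X → X → X) (x : ℕ → X) : ℕ → X
  | 0 => x 0
  | k + 1 => H (iterComp H x k) (x (k + 1))

/-- The `n`-ary operation `F` is derived from the binary operation `H`. -/
def DerivedFrom {X : Type*} {n : ℕ} (F : (Fin n → X) → X) (H : X → X → X) : Prop :=
  ∀ x : ℕ → X, F (fun i : Fin n => x i) = iterComp H x (n - 1)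



lemma inf'_set_congr {A B : Type*} [SemilatticeInf B] {s t : Finset A} (h : s = t)
    (hs : s.Nonempty) (ht : t.Nonempty) (f : A → B) : s.inf' hs f = t.inf' ht f := by
  subst h; rfl

lemma sup'_set_congr {A B : Type*} [SemilatticeSup B] {s t : Finset A} (h : s = t)
    (hs : s.Nonempty) (ht : t.Nonempty) (f : A → B) : s.sup' hs f = t.sup' ht f := by
  subst h; rfl

section Aux
variable {X : Type*} [LinearOrder X] (G : X → X → X)
  (hq : ∀ x y, G x y = x ∨ G x y = y)
  (hs : ∀ x y, G x y = G y x)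
  (hm : ∀ x x' y y', x ≤ x' → y ≤ y' → G x y ≤ G x' y')

include hq hs hm in
lemma keyA (a b c : X) (hab : a ≤ b) :
    G (G a b) c = G (min a c) (max b c) := by
  rcases le_total c a with h1 | h1
  · rw [min_eq_right h1, max_eq_left (h1.trans hab)]
    rcases hq a b with t | t
    · rw [t]
      rcases hq a c with u | u
      · rcases hq c b with v | v
        · -- G a c = a, G c b = c : show a = c
          have h2 : G c a ≤ G c b := hm _ _ _ _ le_rfl hab
          rw [hs c a, u, v] at h2
          rw [u, v]; exact le_antisymm h2 h1
        · -- G c b = b : show a = b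
          have h2 : G c b ≤ G a b := hm _ _ _ _ h1 le_rfl
          rw [t, v] at h2
          rw [u, v]; exact le_antisymm hab h2
      · rw [u]
        rcases hq c b with v | v
        · rw [v]
        · -- u : G a c = c, v : G c b = b : show c = b
          have h2 : G c b ≤ G a b := hm _ _ _ _ h1 le_rfl
          rw [t, v] at h2
          have h3 : G c b ≤ G c a := hm _ _ _ _ le_rfl h2
          rw [v, hs c a, u] at h3
          rw [v]; exact le_antisymm (h1.trans hab) h3
    · rw [t, hs]
  · rcases le_total c b with h2 | h2
    · rw [min_eq_left h1, max_eq_left h2]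
      rcases hq a b with t | t
      · rw [t]
        rcases hq a c with u | u
        · exact u
        · have h3 : G a c ≤ G a b := hm _ _ _ _ le_rfl h2
          rw [t, u] at h3
          rw [u]; exact le_antisymm h3 h1
      · rw [t]
        rcases hq b c with u | u
        · exact u
        · have h3 : G a b ≤ G c b := hm _ _ _ _ h1 le_rfl
          rw [t, hs c b, u] at h3
          rw [u]; exact le_antisymm h2 h3
    · rw [min_eq_left h1, max_eq_right h2]
      rcases hq a b with t | t
      · rw [t]
      · rw [t]
        rcases hq a c with u | u
        · -- G a c = a : show a = b
          have h3 : G a b ≤ G a c := hm _ _ _ _ le_rfl h2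
          rw [t, u] at h3
          have hba : a = b := le_antisymm hab h3
          rw [hba]
        · rcases hq b c with v | v
          · have h3 : G a c ≤ G b c := hm _ _ _ _ hab le_rfl
            rw [u, v] at h3
            rw [u, v]; exact le_antisymm h2 h3
          · rw [u, v]

include hq hs hm in
lemma keyB (x : ℕ → X) (k : ℕ) :
    iterComp G x k
      = G ((Finset.range (k+1)).inf' ⟨0, by simp⟩ x)
          ((Finset.range (k+1)).sup' ⟨0, by simp⟩ x) := by
  induction k with
  | zero =>
      simp only [iterComp, Finset.range_one, Finset.inf'_singleton, Finset.sup'_singleton]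
      rcases hq (x 0) (x 0) with h | h <;> exact h.symm
  | succ k ih =>
      have hne : (Finset.range (k+1)).Nonempty := ⟨0, by simp⟩
      have hle : (Finset.range (k+1)).inf' hne x ≤ (Finset.range (k+1)).sup' hne x :=
        le_trans (Finset.inf'_le _ (by simp : 0 ∈ Finset.range (k+1)))
          (Finset.le_sup' _ (by simp : 0 ∈ Finset.range (k+1)))
      rw [show iterComp G x (k+1) = G (iterComp G x k) (x (k+1)) from rfl, ih,
        keyA G hq hs hm _ _ _ hle]
      congr 1
      · calc min ((Finset.range (k+1)).inf' hne x) (x (k+1))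
            = x (k+1) ⊓ (Finset.range (k+1)).inf' hne x := min_comm _ _
          _ = (insert (k+1) (Finset.range (k+1))).inf' (Finset.insert_nonempty _ _) x :=
              (Finset.inf'_insert hne x).symm
          _ = (Finset.range (k+1+1)).inf' ⟨0, by simp⟩ x :=
              inf'_set_congr (Finset.range_add_one).symm _ _ x
      · calc max ((Finset.range (k+1)).sup' hne x) (x (k+1))
            = x (k+1) ⊔ (Finset.range (k+1)).sup' hne x := max_comm _ _
          _ = (insert (k+1) (Finset.range (k+1))).sup' (Finset.insert_nonempty _ _) x :=
              (Finset.sup'_insert hne x).symm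
          _ = (Finset.range (k+1+1)).sup' ⟨0, by simp⟩ x :=
              sup'_set_congr (Finset.range_add_one).symm _ _ x
end Aux

theorem stmt_8 {X : Type*} [LinearOrder X] {n : ℕ} (hn : 2 ≤ n)
    (G : X → X → X)
    (hq : ∀ x y, G x y = x ∨ G x y = y)
    (hs : ∀ x y, G x y = G y x)
    (hm : ∀ x x' y y', x ≤ x' → y ≤ y' → G x y ≤ G x' y') :
    DerivedFrom (fun x : Fin n → X =>
      G (Finset.univ.inf' (Finset.univ_nonempty_iff.mpr ⟨⟨0, by omega⟩⟩) x)
        (Finset.univ.sup' (Finset.univ_nonempty_iff.mpr ⟨⟨0, by omega⟩⟩) x)) G := by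
  intro x
  refine Eq.trans ?_ (keyB G hq hs hm x (n-1)).symm
  have hset : Finset.range (n-1+1) = (Finset.univ : Finset (Fin n)).map Fin.valEmbedding := by
    rw [Fin.map_valEmbedding_univ, ← Nat.Iio_eq_range]
    congr 1
    omega
  have hne : ((Finset.univ : Finset (Fin n)).map Fin.valEmbedding).Nonempty := by
    rw [← hset]; exact ⟨0, by simp⟩
  erw [inf'_set_congr hset _ hne x, sup'_set_congr hset _ hne x,
    Finset.inf'_map, Finset.sup'_map]
  rfl
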